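/- For all n ≥ 2, the identity ∑_{h=0}^{n} [n choose h]_q + (q^n - 1) ∑_{h=0}^{n-1} [n-1 choose h]_q = ∑_{h=0}^{n} q^{n-h} [n choose h]_q holds as polynomials in q. -/
import Mathlib


open Finset Polynomial

/-- The Gaussian (q-)binomial coefficient `[n choose k]_q` as a polynomial in `q`. -/
noncomputable def qbinom : ℕ → ℕ → Polynomial ℤ
  | _, 0 => 1
  | 0, _ + 1 => 0
  | n + 1, k + 1 => qbinom n k + Polynomial.X ^ (k + 1) * qbinom n (k + 1)

lemma qbinom_zero (n : ℕ) : qbinom n 0 = 1 := by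
  cases n <;> rfl

lemma qbinom_eq_zero : ∀ n k : ℕ, n < k → qbinom n k = 0 := by
  intro n
  induction n with
  | zero =>
    intro k hk
    cases k with
    | zero => omega
    | succ k => rfl
  | succ n ih =>
    intro k hk
    cases k with
    | zero => omega
    | succ k =>
      rw [qbinom, ih k (by omega), ih (k+1) (by omega)]
      ring

lemma qbinom_M (n : ℕ) : ∀ k : ℕ, (X^n - X^k) * qbinom n k
    = X^k * ((X^(k+1) - 1) * qbinom n (k+1)) := by
  induction n with
  | zero =>
    intro k
    cases k with
    | zero => simp [qbinom]
    | succ k =>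
      rw [qbinom_eq_zero 0 (k+1) (by omega), qbinom_eq_zero 0 (k+2) (by omega)]
      ring
  | succ n ih =>
    intro k
    cases k with
    | zero =>
      have h := ih 0
      simp only [qbinom, pow_zero] at *
      linear_combination X * h
    | succ k =>
      have h1 := ih k
      have h2 := ih (k+1)
      show (X^(n+1) - X^(k+1)) * (qbinom n k + X ^ (k + 1) * qbinom n (k + 1))
        = X^(k+1) * ((X^(k+2) - 1) * (qbinom n (k+1) + X ^ (k + 2) * qbinom n (k + 2)))
      linear_combination X * h1 + X^(k+2) * h2

lemma qbinom_L (n : ℕ) (h : ℕ) :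
    (X^(n+1) - X^h) * qbinom (n+1) h = X^h * ((X^(n+1) - 1) * qbinom n h) := by
  cases h with
  | zero => simp [qbinom_zero]
  | succ k =>
    have hm := qbinom_M n k
    show (X^(n+1) - X^(k+1)) * (qbinom n k + X ^ (k + 1) * qbinom n (k + 1))
      = X^(k+1) * ((X^(n+1) - 1) * qbinom n (k+1))
    linear_combination X * hm

/-- For `n ≥ 2`,
`∑_{h=0}^{n} [n choose h]_q + (q^n - 1) ∑_{h=0}^{n-1} [n-1 choose h]_q
  = ∑_{h=0}^{n} q^{n-h} [n choose h]_q`. -/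
theorem qbinom_sum_identity (n : ℕ) (hn : 2 ≤ n) :
    (∑ h ∈ Finset.range (n + 1), qbinom n h) +
        ((Polynomial.X : Polynomial ℤ) ^ n - 1) * ∑ h ∈ Finset.range n, qbinom (n - 1) h =
      ∑ h ∈ Finset.range (n + 1), (Polynomial.X : Polynomial ℤ) ^ (n - h) * qbinom n h := by
  have key : ∀ h ∈ Finset.range (n + 1),
      (X : Polynomial ℤ)^(n-h) * qbinom n h = qbinom n h + (X^n - 1) * qbinom (n-1) h := by
    intro h hh
    rw [Finset.mem_range] at hh
    have hle : h ≤ n := by omega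
    have hL := qbinom_L (n-1) h
    rw [show n - 1 + 1 = n by omega] at hL
    have hx : (X : Polynomial ℤ)^h ≠ 0 := pow_ne_zero _ X_ne_zero
    apply mul_left_cancel₀ hx
    have : (X : Polynomial ℤ)^h * (X^(n-h) * qbinom n h) = X^n * qbinom n h := by
      rw [← mul_assoc, ← pow_add, show h + (n - h) = n by omega]
    rw [this]
    linear_combination hL
  rw [Finset.sum_congr rfl key, Finset.sum_add_distrib, ← Finset.mul_sum,
    Finset.sum_range_succ (fun h => qbinom (n-1) h) n,
    qbinom_eq_zero (n-1) n (by omega), add_zero]
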